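/- Fix n, k with 0 < k ≤ n and define the shift I[1] of a k-subset I of {0,…,n−1} by I[1] := min{ I_i^{l−1} : I ≤ I_i^l, 1 ≤ l ≤ min(k,i) } (componentwise minimum over the indicated collection). Then for all k-subsets I, J: min{I, J}[1] = min{ I[1], J[1] }, and for the special subsets one has I_{i_0}^{l_0}[1] = I_{i_0}^{l_0 − 1} for all 0 < l_0 ≤ min{k, i_0}. -/

import Mathlib

attribute [local instance] Classical.propDecidable

/-- The sorted list of elements of a finset of naturals, in increasing order. -/
def sortedList (I : Finset ℕ) : List ℕ := I.sort (· ≤ ·)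

/-- The componentwise partial order on finsets of naturals. -/
def fle (I J : Finset ℕ) : Prop := List.Forall₂ (· ≤ ·) (sortedList I) (sortedList J)

/-- The componentwise minimum of two finsets of naturals. -/
def fmin (I J : Finset ℕ) : Finset ℕ :=
  (List.zipWith min (sortedList I) (sortedList J)).toFinset

/-- The special `k`-subsets `I_i^l` of `{0, …, n-1}`. -/
def Iil (n k i l : ℕ) : Finset ℕ :=
  if i + k < n + l then Finset.Ico (i - l) i ∪ Finset.Ico (n - k + l) n
  else Finset.Ico (n - k) n

/-- The shift `I[1]`: the componentwise minimum of the collection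
`{I_i^{l-1} : I ≤ I_i^l, 1 ≤ l ≤ min(k,i)}` (computed by folding the componentwise minimum
over this finite collection, starting from the top `k`-subset `{n-k,…,n-1}`). -/
noncomputable def shift (n k : ℕ) (I : Finset ℕ) : Finset ℕ :=
  (((Finset.range n ×ˢ Finset.range (k + 1)).filter
      (fun p => 1 ≤ p.2 ∧ p.2 ≤ min k p.1 ∧ fle I (Iil n k p.1 p.2))).toList).foldr
    (fun p acc => fmin (Iil n k p.1 (p.2 - 1)) acc) (Finset.Ico (n - k) n)

namespace Stmt19Aux

def nth (I : Finset ℕ) (m : ℕ) : ℕ := (sortedList I).getD m 0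

def good (n k : ℕ) (I : Finset ℕ) : Prop := I ⊆ Finset.range n ∧ I.card = k

lemma length_sortedList (I : Finset ℕ) : (sortedList I).length = I.card :=
  Finset.length_sort _

lemma sorted_lt (I : Finset ℕ) : (sortedList I).Pairwise (· < ·) :=
  (Finset.sortedLT_sort I).pairwise

lemma getD_lt_getD {s : List ℕ} (hs : s.Pairwise (· < ·)) {a b : ℕ} (hab : a < b)
    (hb : b < s.length) : s.getD a 0 < s.getD b 0 := by
  rw [List.getD_eq_getElem _ _ (hab.trans hb), List.getD_eq_getElem _ _ hb]
  exact List.pairwise_iff_getElem.mp hs a b _ hb hab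

lemma nth_sep {s : List ℕ} (hs : s.Pairwise (· < ·)) (d : ℕ) {a : ℕ} (h : a + d < s.length) :
    s.getD a 0 + d ≤ s.getD (a + d) 0 := by
  induction d with
  | zero => simp
  | succ d ih =>
    have h' : a + d < s.length := by omega
    have h1 := ih h'
    have h2 : s.getD (a + d) 0 < s.getD (a + d + 1) 0 :=
      getD_lt_getD hs (by omega) (by omega)
    have hrw : a + (d + 1) = a + d + 1 := by omega
    rw [hrw]
    omega

lemma nth_mem {I : Finset ℕ} {m : ℕ} (hm : m < I.card) : nth I m ∈ I := by
  have hm' : m < (sortedList I).length := by rwa [length_sortedList]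
  rw [nth, List.getD_eq_getElem _ _ hm']
  have := List.getElem_mem hm'
  rwa [← Finset.mem_sort (· ≤ ·)]

lemma nth_le {n k : ℕ} {I : Finset ℕ} (hkn : k ≤ n) (hk : 0 < k) (hI : good n k I)
    {m : ℕ} (hm : m < k) : nth I m ≤ n - k + m := by
  have hlen : (sortedList I).length = k := by rw [length_sortedList, hI.2]
  have h1 : nth I m + (k - 1 - m) ≤ nth I (m + (k - 1 - m)) :=
    nth_sep (sorted_lt I) _ (by omega)
  have hmk : m + (k - 1 - m) = k - 1 := by omega
  rw [hmk] at h1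
  have h2 : nth I (k - 1) < n := by
    have := hI.1 (nth_mem (show k - 1 < I.card by rw [hI.2]; omega))
    simpa using Finset.mem_range.mp this
  omega

lemma fle_iff {n k : ℕ} {I J : Finset ℕ} (hI : good n k I) (hJ : good n k J) :
    fle I J ↔ ∀ m, m < k → nth I m ≤ nth J m := by
  have hlI : (sortedList I).length = k := by rw [length_sortedList, hI.2]
  have hlJ : (sortedList J).length = k := by rw [length_sortedList, hJ.2]
  rw [fle, List.forall₂_iff_get]
  constructor
  · rintro ⟨-, h⟩ m hm
    have := h m (by omega) (by omega)
    rw [nth, nth, List.getD_eq_getElem _ _ (show m < (sortedList I).length by omega),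
      List.getD_eq_getElem _ _ (show m < (sortedList J).length by omega)]
    simpa only [List.get_eq_getElem] using this
  · intro h
    refine ⟨by omega, fun i h1 h2 => ?_⟩
    have := h i (by omega)
    rw [nth, nth, List.getD_eq_getElem _ _ h1, List.getD_eq_getElem _ _ h2] at this
    simpa only [List.get_eq_getElem] using this

lemma toFinset_range' (a c : ℕ) : (List.range' a c).toFinset = Finset.Ico a (a + c) := by
  ext x
  simp only [List.mem_toFinset, List.mem_range', Finset.mem_Ico, one_mul]
  constructor
  · rintro ⟨i, hi, rfl⟩; omega
  · intro h; exact ⟨x - a, by omega, by omega⟩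

lemma sortedList_Iil {n k i l : ℕ} (hlk : l ≤ k) (hkn : k ≤ n) (hli : l ≤ i) :
    sortedList (Iil n k i l) =
      if i + k < n + l then List.range' (i - l) l ++ List.range' (n - k + l) (k - l)
      else List.range' (n - k) k := by
  unfold Iil
  split
  · rename_i hcond
    have hs : (List.range' (i - l) l ++ List.range' (n - k + l) (k - l)).Pairwise (· < ·) := by
      rw [List.pairwise_append]
      refine ⟨List.pairwise_lt_range' (pos := Nat.one_pos), List.pairwise_lt_range' (pos := Nat.one_pos), ?_⟩
      intro x hx y hy
      rw [List.mem_range'] at hx hy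
      obtain ⟨ix, hix, rfl⟩ := hx
      obtain ⟨iy, hiy, rfl⟩ := hy
      omega
    have hnd : (List.range' (i - l) l ++ List.range' (n - k + l) (k - l)).Nodup :=
      hs.nodup
    have hfs : (List.range' (i - l) l ++ List.range' (n - k + l) (k - l)).toFinset =
        Finset.Ico (i - l) i ∪ Finset.Ico (n - k + l) n := by
      rw [List.toFinset_append, toFinset_range', toFinset_range']
      congr 1 <;> congr 1 <;> omega
    rw [← hfs]
    exact (List.toFinset_sort _ hnd).mpr (hs.imp le_of_lt)
  · have hs : (List.range' (n - k) k).Pairwise (· < ·) := List.pairwise_lt_range' (pos := Nat.one_pos)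
    have hfs : (List.range' (n - k) k).toFinset = Finset.Ico (n - k) n := by
      rw [toFinset_range']
      congr 1
      omega
    rw [← hfs]
    exact (List.toFinset_sort _ hs.nodup).mpr (hs.imp le_of_lt)

lemma length_sortedList_Iil {n k i l : ℕ} (hlk : l ≤ k) (hkn : k ≤ n) (hli : l ≤ i) :
    (sortedList (Iil n k i l)).length = k := by
  rw [sortedList_Iil hlk hkn hli]
  split <;> simp <;> omega

lemma nth_Iil {n k i l m : ℕ} (hlk : l ≤ k) (hkn : k ≤ n) (hli : l ≤ i) (hm : m < k) :
    nth (Iil n k i l) m = if m < l ∧ i + k < n + l then i - l + m else n - k + m := by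
  rw [nth, sortedList_Iil hlk hkn hli]
  by_cases hcond : i + k < n + l
  · rw [if_pos hcond]
    have hlen : (List.range' (i - l) l ++ List.range' (n - k + l) (k - l)).length = k := by
      simp; omega
    rw [List.getD_eq_getElem _ _ (by omega)]
    by_cases hml : m < l
    · rw [if_pos ⟨hml, hcond⟩]
      rw [List.getElem_append_left (by simpa using hml)]
      simp [List.getElem_range']
    · rw [if_neg (by tauto)]
      rw [List.getElem_append_right (by simpa using hml)]
      simp only [List.length_range', List.getElem_range']
      omega
  · rw [if_neg hcond, if_neg (by tauto)]
    rw [List.getD_eq_getElem _ _ (by simpa using hm)]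
    simp [List.getElem_range']

lemma good_Iil {n k i l : ℕ} (hlk : l ≤ k) (hkn : k ≤ n) (hli : l ≤ i) (hin : i < n) :
    good n k (Iil n k i l) := by
  constructor
  · intro x hx
    rw [Finset.mem_range]
    unfold Iil at hx
    split at hx <;> simp only [Finset.mem_union, Finset.mem_Ico] at hx <;> omega
  · have := length_sortedList_Iil (n := n) hlk hkn hli
    rwa [length_sortedList] at this

lemma Iil_zero {n k : ℕ} : Iil n k 0 0 = Finset.Ico (n - k) n := by
  unfold Iil
  split <;> simp

lemma good_top {n k : ℕ} (hk : 0 < k) (hkn : k ≤ n) : good n k (Finset.Ico (n - k) n) := by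
  rw [← Iil_zero (k := k)]
  exact good_Iil (by omega) hkn (le_refl 0) (by omega)

lemma nth_top {n k m : ℕ} (hk : 0 < k) (hkn : k ≤ n) (hm : m < k) :
    nth (Finset.Ico (n - k) n) m = n - k + m := by
  rw [← Iil_zero (k := k), nth_Iil (by omega) hkn (le_refl 0) hm]
  simp

lemma sortedList_fmin {n k : ℕ} {I J : Finset ℕ} (hI : good n k I) (hJ : good n k J) :
    sortedList (fmin I J) = List.zipWith min (sortedList I) (sortedList J) := by
  have hlI : (sortedList I).length = k := by rw [length_sortedList, hI.2]
  have hlJ : (sortedList J).length = k := by rw [length_sortedList, hJ.2]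
  have hlen : (List.zipWith min (sortedList I) (sortedList J)).length = k := by
    rw [List.length_zipWith, hlI, hlJ, min_self]
  have hs : (List.zipWith min (sortedList I) (sortedList J)).Pairwise (· < ·) := by
    rw [List.pairwise_iff_getElem]
    intro a b ha hb hab
    rw [List.getElem_zipWith, List.getElem_zipWith]
    have h1 : (sortedList I)[a]'(by omega) < (sortedList I)[b]'(by omega) :=
      List.pairwise_iff_getElem.mp (sorted_lt I) a b (by omega) (by omega) hab
    have h2 : (sortedList J)[a]'(by omega) < (sortedList J)[b]'(by omega) :=
      List.pairwise_iff_getElem.mp (sorted_lt J) a b (by omega) (by omega) hab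
    exact lt_min (lt_of_le_of_lt (min_le_left _ _) h1) (lt_of_le_of_lt (min_le_right _ _) h2)
  exact (List.toFinset_sort _ hs.nodup).mpr (hs.imp le_of_lt)

lemma good_fmin {n k : ℕ} {I J : Finset ℕ} (hI : good n k I) (hJ : good n k J) :
    good n k (fmin I J) := by
  have hsl := sortedList_fmin hI hJ
  have hlI : (sortedList I).length = k := by rw [length_sortedList, hI.2]
  have hlJ : (sortedList J).length = k := by rw [length_sortedList, hJ.2]
  have hlen : (sortedList (fmin I J)).length = k := by
    rw [hsl, List.length_zipWith, hlI, hlJ, min_self]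
  constructor
  · intro x hx
    rw [Finset.mem_range]
    rw [fmin, List.mem_toFinset, List.mem_iff_getElem] at hx
    obtain ⟨a, ha, rfl⟩ := hx
    rw [List.getElem_zipWith]
    have haI : a < (sortedList I).length := by
      rw [List.length_zipWith] at ha; omega
    have hmem : (sortedList I)[a]'haI ∈ I := (Finset.mem_sort (· ≤ ·)).mp (List.getElem_mem haI)
    have h2 := Finset.mem_range.mp (hI.1 hmem)
    exact lt_of_le_of_lt (min_le_left _ _) h2
  · rw [← length_sortedList, hlen]

lemma nth_fmin {n k : ℕ} {I J : Finset ℕ} (hI : good n k I) (hJ : good n k J)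
    {m : ℕ} (hm : m < k) : nth (fmin I J) m = min (nth I m) (nth J m) := by
  have hlI : (sortedList I).length = k := by rw [length_sortedList, hI.2]
  have hlJ : (sortedList J).length = k := by rw [length_sortedList, hJ.2]
  rw [nth, nth, nth, sortedList_fmin hI hJ,
    List.getD_eq_getElem _ _ (by rw [List.length_zipWith]; omega),
    List.getD_eq_getElem _ _ (by omega), List.getD_eq_getElem _ _ (by omega),
    List.getElem_zipWith]

lemma fle_Iil_iff {n k : ℕ} {I : Finset ℕ} (hk : 0 < k) (hkn : k ≤ n) (hI : good n k I)
    {i l : ℕ} (hl1 : 1 ≤ l) (hlk : l ≤ k) (hli : l ≤ i) (hin : i < n) :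
    fle I (Iil n k i l) ↔ nth I (l - 1) < i := by
  have hg := good_Iil hlk hkn hli hin
  rw [fle_iff hI hg]
  constructor
  · intro h
    have h1 := h (l - 1) (by omega)
    rw [nth_Iil hlk hkn hli (by omega)] at h1
    by_cases hcond : i + k < n + l
    · rw [if_pos ⟨by omega, hcond⟩] at h1
      omega
    · have := nth_le hkn hk hI (show l - 1 < k by omega)
      omega
  · intro h m hm
    rw [nth_Iil hlk hkn hli hm]
    split
    · rename_i hc
      have hsep : nth I m + ((l - 1) - m) ≤ nth I (l - 1) := by
        have := nth_sep (sorted_lt I) ((l - 1) - m) (a := m)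
          (by rw [length_sortedList, hI.2]; omega)
        rw [show m + ((l - 1) - m) = l - 1 by omega] at this
        exact this
      omega
    · exact nth_le hkn hk hI hm

lemma fle_refl (I : Finset ℕ) : fle I I :=
  List.forall₂_same.mpr fun x _ => le_refl x

noncomputable def Sset (n k : ℕ) (I : Finset ℕ) : Finset (ℕ × ℕ) :=
  (Finset.range n ×ˢ Finset.range (k + 1)).filter
    (fun p => 1 ≤ p.2 ∧ p.2 ≤ min k p.1 ∧ fle I (Iil n k p.1 p.2))

lemma shift_eq (n k : ℕ) (I : Finset ℕ) :
    shift n k I = ((Sset n k I).toList).foldr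
      (fun p acc => fmin (Iil n k p.1 (p.2 - 1)) acc) (Finset.Ico (n - k) n) := rfl

lemma mem_Sset {n k : ℕ} {I : Finset ℕ} {p : ℕ × ℕ} :
    p ∈ Sset n k I ↔ p.1 < n ∧ 1 ≤ p.2 ∧ p.2 ≤ k ∧ p.2 ≤ p.1 ∧ fle I (Iil n k p.1 p.2) := by
  rw [Sset, Finset.mem_filter, Finset.mem_product, Finset.mem_range, Finset.mem_range]
  constructor
  · rintro ⟨⟨h1, h2⟩, h3, h4, h5⟩
    exact ⟨h1, h3, by omega, by omega, h5⟩
  · rintro ⟨h1, h3, h4, h5, h6⟩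
    exact ⟨⟨h1, by omega⟩, h3, by omega, h6⟩

lemma shift_foldr {n k : ℕ} (hk : 0 < k) (hkn : k ≤ n) (L : List (ℕ × ℕ))
    (hL : ∀ p ∈ L, 1 ≤ p.2 ∧ p.2 ≤ k ∧ p.2 ≤ p.1 ∧ p.1 < n) :
    good n k (L.foldr (fun p acc => fmin (Iil n k p.1 (p.2 - 1)) acc) (Finset.Ico (n - k) n)) ∧
    ∀ m, m < k →
      nth (L.foldr (fun p acc => fmin (Iil n k p.1 (p.2 - 1)) acc) (Finset.Ico (n - k) n)) m =
      L.foldr (fun p acc => min (nth (Iil n k p.1 (p.2 - 1)) m) acc) (n - k + m) := by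
  induction L with
  | nil => exact ⟨good_top hk hkn, fun m hm => nth_top hk hkn hm⟩
  | cons p L ih =>
    have hp := hL p List.mem_cons_self
    have ih' := ih (fun q hq => hL q (List.mem_cons_of_mem _ hq))
    have hgp : good n k (Iil n k p.1 (p.2 - 1)) :=
      good_Iil (by omega) hkn (by omega) (by omega)
    refine ⟨good_fmin hgp ih'.1, fun m hm => ?_⟩
    simp only [List.foldr_cons]
    rw [nth_fmin hgp ih'.1 hm, ih'.2 m hm]

lemma foldr_toList_min {α : Type*} [DecidableEq α] (S : Finset α) (f : α → ℕ) (b : ℕ) :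
    S.toList.foldr (fun p acc => min (f p) acc) b = S.fold min b f := by
  induction S using Finset.induction_on with
  | empty => simp
  | insert _ _ ha ih =>
    rename_i a s
    have hperm := Finset.toList_insert ha
    have hlc : LeftCommutative (fun (p : α) (acc : ℕ) => min (f p) acc) :=
      ⟨fun p q acc => by rw [min_left_comm]⟩
    rw [hperm.foldr_eq, List.foldr_cons, ih, Finset.fold_insert ha]

lemma fold_min_le_base {α : Type*} (S : Finset α) (f : α → ℕ) (b : ℕ) :
    S.fold min b f ≤ b :=
  (Finset.fold_min_le b).mpr (Or.inl le_rfl)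

lemma fold_min_union {α : Type*} [DecidableEq α] (s t : Finset α) (f : α → ℕ) (b : ℕ) :
    (s ∪ t).fold min b f = min (s.fold min b f) (t.fold min b f) := by
  induction s using Finset.induction_on with
  | empty =>
    simp only [Finset.empty_union, Finset.fold_empty]
    exact (min_eq_right (fold_min_le_base t f b)).symm
  | insert _ _ ha ih =>
    rename_i a s
    rw [Finset.insert_union, Finset.fold_insert_idem, Finset.fold_insert_idem, ih, min_assoc]

lemma eq_of_nth {n k : ℕ} {I J : Finset ℕ} (hI : good n k I) (hJ : good n k J)
    (h : ∀ m, m < k → nth I m = nth J m) : I = J := by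
  have hlI : (sortedList I).length = k := by rw [length_sortedList, hI.2]
  have hlJ : (sortedList J).length = k := by rw [length_sortedList, hJ.2]
  have hsl : sortedList I = sortedList J := by
    apply List.ext_getElem (by omega)
    intro m h1 h2
    have := h m (by omega)
    rwa [nth, nth, List.getD_eq_getElem _ _ h1, List.getD_eq_getElem _ _ h2] at this
  have := congrArg List.toFinset hsl
  rwa [sortedList, sortedList, Finset.sort_toFinset, Finset.sort_toFinset] at this

lemma shift_spec {n k : ℕ} (hk : 0 < k) (hkn : k ≤ n) (I : Finset ℕ) :
    good n k (shift n k I) ∧ ∀ m, m < k →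
      nth (shift n k I) m =
        (Sset n k I).fold min (n - k + m) (fun p => nth (Iil n k p.1 (p.2 - 1)) m) := by
  rw [shift_eq]
  have hL : ∀ p ∈ (Sset n k I).toList, 1 ≤ p.2 ∧ p.2 ≤ k ∧ p.2 ≤ p.1 ∧ p.1 < n := by
    intro p hp
    have := mem_Sset.mp (Finset.mem_toList.mp hp)
    tauto
  obtain ⟨h1, h2⟩ := shift_foldr hk hkn _ hL
  exact ⟨h1, fun m hm => by rw [h2 m hm, foldr_toList_min]⟩

lemma Sset_fmin {n k : ℕ} (hk : 0 < k) (hkn : k ≤ n) {I J : Finset ℕ}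
    (hI : good n k I) (hJ : good n k J) :
    Sset n k (fmin I J) = Sset n k I ∪ Sset n k J := by
  have hm := good_fmin hI hJ
  ext p
  rw [Finset.mem_union, mem_Sset, mem_Sset, mem_Sset]
  constructor
  · rintro ⟨h1, h2, h3, h4, h5⟩
    rw [fle_Iil_iff hk hkn hm h2 h3 h4 h1, nth_fmin hI hJ (by omega), min_lt_iff] at h5
    rcases h5 with h | h
    · exact Or.inl ⟨h1, h2, h3, h4, (fle_Iil_iff hk hkn hI h2 h3 h4 h1).mpr h⟩
    · exact Or.inr ⟨h1, h2, h3, h4, (fle_Iil_iff hk hkn hJ h2 h3 h4 h1).mpr h⟩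
  · rintro (⟨h1, h2, h3, h4, h5⟩ | ⟨h1, h2, h3, h4, h5⟩)
    · rw [fle_Iil_iff hk hkn hI h2 h3 h4 h1] at h5
      refine ⟨h1, h2, h3, h4, ?_⟩
      rw [fle_Iil_iff hk hkn hm h2 h3 h4 h1, nth_fmin hI hJ (by omega), min_lt_iff]
      exact Or.inl h5
    · rw [fle_Iil_iff hk hkn hJ h2 h3 h4 h1] at h5
      refine ⟨h1, h2, h3, h4, ?_⟩
      rw [fle_Iil_iff hk hkn hm h2 h3 h4 h1, nth_fmin hI hJ (by omega), min_lt_iff]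
      exact Or.inr h5

end Stmt19Aux

open Stmt19Aux in
/-- The shift is compatible with componentwise minima: `min{I,J}[1] = min{I[1], J[1]}` for
all `k`-subsets `I, J` of `{0,…,n-1}`; moreover on the special subsets the shift simply
decreases the parameter: `I_{i₀}^{l₀}[1] = I_{i₀}^{l₀-1}` for all `0 < l₀ ≤ min{k, i₀}`. -/
theorem stmt19 (n k : ℕ) (hk : 0 < k) (hkn : k ≤ n) :
    (∀ I J : Finset ℕ, I ⊆ Finset.range n → J ⊆ Finset.range n →
      I.card = k → J.card = k →
      shift n k (fmin I J) = fmin (shift n k I) (shift n k J))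
    ∧ ∀ i0 l0 : ℕ, i0 < n → 0 < l0 → l0 ≤ k → l0 ≤ i0 →
        shift n k (Iil n k i0 l0) = Iil n k i0 (l0 - 1) := by
  constructor
  · intro I J hIr hJr hIc hJc
    have hI : good n k I := ⟨hIr, hIc⟩
    have hJ : good n k J := ⟨hJr, hJc⟩
    have hsI := shift_spec hk hkn I
    have hsJ := shift_spec hk hkn J
    have hsm := shift_spec hk hkn (fmin I J)
    apply eq_of_nth hsm.1 (good_fmin hsI.1 hsJ.1)
    intro m hm
    rw [hsm.2 m hm, nth_fmin hsI.1 hsJ.1 hm, hsI.2 m hm, hsJ.2 m hm,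
      Sset_fmin hk hkn hI hJ, fold_min_union]
  · intro i0 l0 hi0 hl01 hl0k hl0i
    have hgI0 : good n k (Iil n k i0 l0) := good_Iil hl0k hkn hl0i hi0
    have hg' : good n k (Iil n k i0 (l0 - 1)) := good_Iil (by omega) hkn (by omega) hi0
    have hs := shift_spec hk hkn (Iil n k i0 l0)
    apply eq_of_nth hs.1 hg'
    intro m hm
    rw [hs.2 m hm]
    apply le_antisymm
    · refine (Finset.fold_min_le _).mpr (Or.inr ⟨(i0, l0), ?_, le_rfl⟩)
      exact mem_Sset.mpr ⟨hi0, hl01, hl0k, hl0i, fle_refl _⟩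
    · refine (Finset.le_fold_min _).mpr ⟨?_, ?_⟩
      · rw [nth_Iil (by omega) hkn (by omega) hm]
        split <;> omega
      · intro p hp
        obtain ⟨h1, h2, h3, h4, h5⟩ := mem_Sset.mp hp
        rw [fle_Iil_iff hk hkn hgI0 h2 h3 h4 h1] at h5
        rw [nth_Iil hl0k hkn hl0i (show p.2 - 1 < k by omega)] at h5
        rw [nth_Iil (show l0 - 1 ≤ k by omega) hkn (by omega) hm,
          nth_Iil (show p.2 - 1 ≤ k by omega) hkn (by omega) hm]
        split_ifs at h5 ⊢ <;> omega
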